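/- (Theorem 2, primal part.) Let A_j = A_i ∪ {j} with j ∉ A_i, and suppose both G_{A_i} and G_{A_j} have full row rank. Define c_i = c_j, v_i = v_j, and f_i = −f_j. Then for every θ ∈ ℝⁿ, the primal parametric solution obtained by removing constraint j from A_j satisfies z_{A_i}(θ) = z_{A_j}(θ) + f_i (c_i + v_iᵀθ). -/

import Mathlib

open Matrix

noncomputable section
namespace MpQP

/-- Submatrix of the rows of `G` indexed by the finite index set `A`. -/
def subRows {nc p : ℕ} (G : Matrix (Fin nc) (Fin p) ℝ) (A : Finset (Fin nc)) :
    Matrix A (Fin p) ℝ := Matrix.of fun i k => G i.val k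

/-- Subvector of `b` indexed by `A`. -/
def subVec {nc : ℕ} (b : Fin nc → ℝ) (A : Finset (Fin nc)) : A → ℝ := fun i => b i.val

/-- `G_A` has full row rank, i.e. the rows of `G` indexed by `A` are linearly independent. -/
def FullRowRank {nc m : ℕ} (G : Matrix (Fin nc) (Fin m) ℝ) (A : Finset (Fin nc)) : Prop :=
  LinearIndependent ℝ (fun i : A => G i.val)

/-- The parametric dual solution `λ_A(θ) = −(G_A H⁻¹ G_Aᵀ)⁻¹ (b_A + S_A θ)`. -/
def lamOf {m n nc : ℕ} (H : Matrix (Fin m) (Fin m) ℝ) (G : Matrix (Fin nc) (Fin m) ℝ)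
    (b : Fin nc → ℝ) (S : Matrix (Fin nc) (Fin n) ℝ) (A : Finset (Fin nc))
    (θ : Fin n → ℝ) : A → ℝ :=
  -((subRows G A * H⁻¹ * (subRows G A)ᵀ)⁻¹.mulVec
      (fun i => b i.val + S.mulVec θ i.val))

/-- The parametric primal solution `z_A(θ) = −H⁻¹ G_Aᵀ λ_A(θ)`. -/
def zOf {m n nc : ℕ} (H : Matrix (Fin m) (Fin m) ℝ) (G : Matrix (Fin nc) (Fin m) ℝ)
    (b : Fin nc → ℝ) (S : Matrix (Fin nc) (Fin n) ℝ) (A : Finset (Fin nc))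
    (θ : Fin n → ℝ) : Fin m → ℝ :=
  -((H⁻¹ * (subRows G A)ᵀ).mulVec (lamOf H G b S A θ))

/-- `λ̃_A(θ) ∈ ℝ^{n_c}`: the dual solution extended by zeros outside `A`. -/
def lamExt {m n nc : ℕ} (H : Matrix (Fin m) (Fin m) ℝ) (G : Matrix (Fin nc) (Fin m) ℝ)
    (b : Fin nc → ℝ) (S : Matrix (Fin nc) (Fin n) ℝ) (A : Finset (Fin nc))
    (θ : Fin n → ℝ) : Fin nc → ℝ :=
  fun k => if h : k ∈ A then lamOf H G b S A θ ⟨k, h⟩ else 0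

/-- `W = G_A H⁻¹ G_Aᵀ`. -/
def Wmat {m nc : ℕ} (H : Matrix (Fin m) (Fin m) ℝ) (G : Matrix (Fin nc) (Fin m) ℝ)
    (A : Finset (Fin nc)) : Matrix A A ℝ :=
  subRows G A * H⁻¹ * (subRows G A)ᵀ

/-- `w = G_A H⁻¹ G_jᵀ`. -/
def wvec {m nc : ℕ} (H : Matrix (Fin m) (Fin m) ℝ) (G : Matrix (Fin nc) (Fin m) ℝ)
    (A : Finset (Fin nc)) (j : Fin nc) : A → ℝ :=
  (subRows G A * H⁻¹).mulVec (G j)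

/-- `w₀ = G_j H⁻¹ G_jᵀ`. -/
def w0 {m nc : ℕ} (H : Matrix (Fin m) (Fin m) ℝ) (G : Matrix (Fin nc) (Fin m) ℝ)
    (j : Fin nc) : ℝ :=
  G j ⬝ᵥ H⁻¹.mulVec (G j)

/-- The Schur complement `C = w₀ − wᵀ W⁻¹ w`. -/
def Cval {m nc : ℕ} (H : Matrix (Fin m) (Fin m) ℝ) (G : Matrix (Fin nc) (Fin m) ℝ)
    (A : Finset (Fin nc)) (j : Fin nc) : ℝ :=
  w0 H G j - wvec H G A j ⬝ᵥ (Wmat H G A)⁻¹.mulVec (wvec H G A j)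

/-- `c_j = C⁻¹ (wᵀ W⁻¹ b_A − b_j)`. -/
def cVal {m nc : ℕ} (H : Matrix (Fin m) (Fin m) ℝ) (G : Matrix (Fin nc) (Fin m) ℝ)
    (b : Fin nc → ℝ) (A : Finset (Fin nc)) (j : Fin nc) : ℝ :=
  (Cval H G A j)⁻¹ * (wvec H G A j ⬝ᵥ (Wmat H G A)⁻¹.mulVec (subVec b A) - b j)

/-- `v_j = C⁻¹ (S_Aᵀ W⁻¹ w − S_jᵀ)`. -/
def vVec {m n nc : ℕ} (H : Matrix (Fin m) (Fin m) ℝ) (G : Matrix (Fin nc) (Fin m) ℝ)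
    (S : Matrix (Fin nc) (Fin n) ℝ) (A : Finset (Fin nc)) (j : Fin nc) : Fin n → ℝ :=
  (Cval H G A j)⁻¹ •
    ((subRows S A)ᵀ.mulVec ((Wmat H G A)⁻¹.mulVec (wvec H G A j)) - S j)

/-- `d̃_j ∈ ℝ^{n_c}`: equal to `W⁻¹ w` on `A`, to `−1` at index `j`, and `0` elsewhere. -/
def dExt {m nc : ℕ} (H : Matrix (Fin m) (Fin m) ℝ) (G : Matrix (Fin nc) (Fin m) ℝ)
    (A : Finset (Fin nc)) (j : Fin nc) : Fin nc → ℝ :=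
  fun k =>
    if h : k ∈ A then (Wmat H G A)⁻¹.mulVec (wvec H G A j) ⟨k, h⟩
    else if k = j then -1 else 0

/-- `f_j = H⁻¹ G_{A ∪ {j}}ᵀ (d̃_j restricted to A ∪ {j})`. -/
def fVec {m nc : ℕ} (H : Matrix (Fin m) (Fin m) ℝ) (G : Matrix (Fin nc) (Fin m) ℝ)
    (A : Finset (Fin nc)) (j : Fin nc) : Fin m → ℝ :=
  (H⁻¹ * (subRows G (insert j A))ᵀ).mulVec (fun i => dExt H G A j i.val)


lemma sum_insert_subtype {α : Type*} [DecidableEq α] {s : Finset α} {j : α} (hj : j ∉ s)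
    (f : {i // i ∈ insert j s} → ℝ) :
    ∑ k : {i // i ∈ insert j s}, f k =
      f ⟨j, Finset.mem_insert_self j s⟩ +
        ∑ k : {i // i ∈ s}, f ⟨k.1, Finset.mem_insert_of_mem k.2⟩ := by
  rw [← Equiv.sum_comp (Finset.subtypeInsertEquivOption hj).symm f, Fintype.sum_option]
  rfl

lemma Wmat_apply {m nc : ℕ} (H : Matrix (Fin m) (Fin m) ℝ) (G : Matrix (Fin nc) (Fin m) ℝ)
    (A : Finset (Fin nc)) (i k : A) :
    Wmat H G A i k = G i.val ⬝ᵥ H⁻¹ *ᵥ G k.val := by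
  simp only [Wmat, Matrix.mul_apply, Matrix.transpose_apply, subRows, Matrix.of_apply,
    dotProduct, Matrix.mulVec, Finset.sum_mul, Finset.mul_sum]
  rw [Finset.sum_comm]
  exact Finset.sum_congr rfl fun l _ => Finset.sum_congr rfl fun q _ => by ring

lemma wvec_apply {m nc : ℕ} (H : Matrix (Fin m) (Fin m) ℝ) (G : Matrix (Fin nc) (Fin m) ℝ)
    (A : Finset (Fin nc)) (j : Fin nc) (i : A) :
    wvec H G A j i = G i.val ⬝ᵥ H⁻¹ *ᵥ G j := by
  simp only [wvec, Matrix.mul_apply, subRows, Matrix.of_apply,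
    dotProduct, Matrix.mulVec, Finset.sum_mul, Finset.mul_sum]
  rw [Finset.sum_comm]
  exact Finset.sum_congr rfl fun l _ => Finset.sum_congr rfl fun q _ => by ring

lemma transpose_eq_of_isHermitian {ι : Type*} {M : Matrix ι ι ℝ} (h : M.IsHermitian) :
    Mᵀ = M := by
  rw [← Matrix.conjTranspose_eq_transpose_of_trivial]; exact h.eq

lemma posDef_Wmat {m nc : ℕ} {H : Matrix (Fin m) (Fin m) ℝ} (hH : H.PosDef)
    {G : Matrix (Fin nc) (Fin m) ℝ} {A : Finset (Fin nc)} (hA : FullRowRank G A) :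
    (Wmat H G A).PosDef := by
  have hHi : H⁻¹.PosDef := hH.inv
  refine Matrix.posDef_iff_dotProduct_mulVec.mpr ⟨?_, ?_⟩
  · show (subRows G A * H⁻¹ * (subRows G A)ᵀ)ᴴ = subRows G A * H⁻¹ * (subRows G A)ᵀ
    rw [Matrix.conjTranspose_eq_transpose_of_trivial, Matrix.transpose_mul, Matrix.transpose_mul,
      Matrix.transpose_transpose, transpose_eq_of_isHermitian hHi.isHermitian,
      ← Matrix.mul_assoc]
  · intro x hx
    have key : (Wmat H G A) *ᵥ x = subRows G A *ᵥ (H⁻¹ *ᵥ ((subRows G A)ᵀ *ᵥ x)) := by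
      rw [Wmat, Matrix.mulVec_mulVec, Matrix.mulVec_mulVec]
    have hy : (subRows G A)ᵀ *ᵥ x ≠ 0 := by
      intro h0
      apply hx
      have hz : ∑ i : A, x i • (fun i : A => G i.val) i = 0 := by
        funext l
        have h1 := congrFun h0 l
        simp only [Matrix.mulVec, dotProduct, Matrix.transpose_apply, subRows,
          Matrix.of_apply, Pi.zero_apply] at h1
        simpa [Finset.sum_apply, mul_comm] using h1
      funext i
      exact Fintype.linearIndependent_iff.mp hA x hz i
    have := hHi.dotProduct_mulVec_pos hy
    simpa [key, Matrix.dotProduct_mulVec, Matrix.mulVec_transpose] using this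

lemma inv_mulVec_of_mulVec_eq {ι : Type*} [Fintype ι] [DecidableEq ι] {M : Matrix ι ι ℝ}
    (hM : IsUnit M.det) {x u : ι → ℝ} (h : M *ᵥ x = u) : M⁻¹ *ᵥ u = x := by
  rw [← h, Matrix.mulVec_mulVec, Matrix.nonsing_inv_mul _ hM, Matrix.one_mulVec]

lemma mulVec_inv_cancel {ι : Type*} [Fintype ι] [DecidableEq ι] {M : Matrix ι ι ℝ}
    (hM : IsUnit M.det) (v : ι → ℝ) : M *ᵥ (M⁻¹ *ᵥ v) = v := by
  rw [Matrix.mulVec_mulVec, Matrix.mul_nonsing_inv _ hM, Matrix.one_mulVec]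

lemma dot_symm {m : ℕ} {H : Matrix (Fin m) (Fin m) ℝ} (hH : H.PosDef)
    (x y : Fin m → ℝ) : x ⬝ᵥ H⁻¹ *ᵥ y = y ⬝ᵥ H⁻¹ *ᵥ x := by
  rw [Matrix.dotProduct_mulVec x, dotProduct_comm]
  congr 1
  rw [← Matrix.mulVec_transpose, transpose_eq_of_isHermitian hH.inv.isHermitian]


/-- Theorem 2, primal part: removing constraint `j` from `A_j = A_i ∪ {j}` gives
`z_{A_i}(θ) = z_{A_j}(θ) + (c_i + v_iᵀθ) f_i`, where `c_i = c_j`, `v_i = v_j`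
and `f_i = −f_j`. -/
theorem primal_rankOne_update_remove
    {m n nc : ℕ} (H : Matrix (Fin m) (Fin m) ℝ) (hH : H.PosDef)
    (G : Matrix (Fin nc) (Fin m) ℝ) (b : Fin nc → ℝ) (S : Matrix (Fin nc) (Fin n) ℝ)
    (Ai : Finset (Fin nc)) (j : Fin nc) (hj : j ∉ Ai)
    (hAi : FullRowRank G Ai) (hAj : FullRowRank G (insert j Ai))
    (ci : ℝ) (hci : ci = cVal H G b Ai j)
    (vi : Fin n → ℝ) (hvi : vi = vVec H G S Ai j)
    (fi : Fin m → ℝ) (hfi : fi = -fVec H G Ai j) :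
    ∀ θ : Fin n → ℝ,
      zOf H G b S Ai θ =
        zOf H G b S (insert j Ai) θ + (ci + vi ⬝ᵥ θ) • fi := by
  intro θ
  classical
  have hjmem : j ∈ insert j Ai := Finset.mem_insert_self j Ai
  set u : Fin nc → ℝ := fun k => b k + (S *ᵥ θ) k with hu
  set W := Wmat H G Ai with hWdef
  set M := Wmat H G (insert j Ai) with hMdef
  set w := wvec H G Ai j with hwdef
  set C := Cval H G Ai j with hCdef
  have hW : W.PosDef := posDef_Wmat hH hAi
  have hM : M.PosDef := posDef_Wmat hH hAj
  have hWu : IsUnit W.det := isUnit_iff_ne_zero.mpr hW.det_pos.ne'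
  have hMu : IsUnit M.det := isUnit_iff_ne_zero.mpr hM.det_pos.ne'
  set p : {i // i ∈ Ai} → ℝ := W⁻¹ *ᵥ (fun i : {i // i ∈ Ai} => u i.val) with hp
  set q : {i // i ∈ Ai} → ℝ := W⁻¹ *ᵥ w with hq
  have hWp : W *ᵥ p = (fun i : {i // i ∈ Ai} => u i.val) := mulVec_inv_cancel hWu _
  have hWq : W *ᵥ q = w := mulVec_inv_cancel hWu _
  set α : ℝ := C⁻¹ * (w ⬝ᵥ p - u j) with hαdef
  have hMsplit : ∀ (y : {i // i ∈ insert j Ai} → ℝ) (i : {i // i ∈ insert j Ai}),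
      (M *ᵥ y) i = (G i.val ⬝ᵥ H⁻¹ *ᵥ G j) * y ⟨j, hjmem⟩ +
        ∑ k : {i // i ∈ Ai}, (G i.val ⬝ᵥ H⁻¹ *ᵥ G k.val) *
          y ⟨k.1, Finset.mem_insert_of_mem k.2⟩ := by
    intro y i
    have h0 : (M *ᵥ y) i = ∑ k : {i // i ∈ insert j Ai}, M i k * y k := rfl
    rw [h0, sum_insert_subtype hj (fun k => M i k * y k)]
    simp only [hMdef, Wmat_apply]
  have hWsum : ∀ (a : {i // i ∈ Ai} → ℝ) (i : {i // i ∈ Ai}),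
      ∑ k : {i // i ∈ Ai}, (G i.val ⬝ᵥ H⁻¹ *ᵥ G k.val) * a k = (W *ᵥ a) i := by
    intro a i
    have h0 : (W *ᵥ a) i = ∑ k : {i // i ∈ Ai}, W i k * a k := rfl
    rw [h0]
    simp only [hWdef, Wmat_apply]
  have hwapp : ∀ i : {i // i ∈ Ai}, w i = G i.val ⬝ᵥ H⁻¹ *ᵥ G j :=
    fun i => wvec_apply H G Ai j i
  have hCq : C = w0 H G j - w ⬝ᵥ q := rfl
  have hC : C ≠ 0 := by
    intro h0
    set y : {i // i ∈ insert j Ai} → ℝ :=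
      fun i => if h : i.val ∈ Ai then q ⟨i.val, h⟩ else -1 with hy
    have hyj : y ⟨j, hjmem⟩ = -1 := by simp [hy, hj]
    have hyk : ∀ k : {i // i ∈ Ai}, y ⟨k.1, Finset.mem_insert_of_mem k.2⟩ = q k := by
      intro k; simp [hy, k.2]
    have hMy : M *ᵥ y = 0 := by
      funext i
      rw [hMsplit, hyj]
      simp only [hyk]
      by_cases h : i.val ∈ Ai
      · have h1 : G i.val ⬝ᵥ H⁻¹ *ᵥ G j = w ⟨i.val, h⟩ := (hwapp ⟨i.val, h⟩).symm
        have h2 := hWsum q ⟨i.val, h⟩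
        rw [h1, h2, hWq]
        simp
      · have hij : i.val = j := (Finset.mem_insert.mp i.2).resolve_right h
        rw [hij]
        have hsym : ∀ k : {i // i ∈ Ai}, G j ⬝ᵥ H⁻¹ *ᵥ G k.val = w k := by
          intro k
          rw [dot_symm hH (G j) (G k.val), ← hwapp k]
        simp only [hsym]
        have hCzero : w ⬝ᵥ q = w0 H G j := by
          have h4 := hCq; rw [h0] at h4; linarith
        show G j ⬝ᵥ H⁻¹ *ᵥ G j * (-1) + w ⬝ᵥ q = 0
        have e : G j ⬝ᵥ H⁻¹ *ᵥ G j = w0 H G j := rfl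
        rw [e, hCzero]
        ring
    have hy0 : y = 0 := by
      have h1 := inv_mulVec_of_mulVec_eq hMu hMy
      rw [Matrix.mulVec_zero] at h1
      exact h1.symm
    have h2 := congrFun hy0 ⟨j, hjmem⟩
    rw [hyj] at h2
    norm_num at h2
  have hαC : α * C = w ⬝ᵥ p - u j := by
    rw [hαdef]; field_simp
  set x : {i // i ∈ insert j Ai} → ℝ :=
    fun i => if h : i.val ∈ Ai then p ⟨i.val, h⟩ + α * q ⟨i.val, h⟩ else -α with hx
  have hxj : x ⟨j, hjmem⟩ = -α := by simp [hx, hj]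
  have hxk : ∀ k : {i // i ∈ Ai}, x ⟨k.1, Finset.mem_insert_of_mem k.2⟩ = p k + α * q k := by
    intro k; simp [hx, k.2]
  have hMx : M *ᵥ x = fun i : {i // i ∈ insert j Ai} => u i.val := by
    funext i
    rw [hMsplit, hxj]
    simp only [hxk]
    by_cases h : i.val ∈ Ai
    · have h1 : G i.val ⬝ᵥ H⁻¹ *ᵥ G j = w ⟨i.val, h⟩ := (hwapp ⟨i.val, h⟩).symm
      have h2 : ∑ k : {i // i ∈ Ai}, (G i.val ⬝ᵥ H⁻¹ *ᵥ G k.val) * (p k + α * q k)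
          = (W *ᵥ (p + α • q)) ⟨i.val, h⟩ := by
        have h3 := hWsum (p + α • q) ⟨i.val, h⟩
        simpa [Pi.add_apply, Pi.smul_apply, smul_eq_mul] using h3
      rw [h1, h2, Matrix.mulVec_add, Matrix.mulVec_smul, hWp, hWq]
      simp only [Pi.add_apply, Pi.smul_apply, smul_eq_mul]
      ring
    · have hij : i.val = j := (Finset.mem_insert.mp i.2).resolve_right h
      rw [hij]
      have hsym : ∀ k : {i // i ∈ Ai}, G j ⬝ᵥ H⁻¹ *ᵥ G k.val = w k := by
        intro k
        rw [dot_symm hH (G j) (G k.val), ← hwapp k]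
      simp only [hsym]
      have hsum : ∑ k : {i // i ∈ Ai}, w k * (p k + α * q k)
          = w ⬝ᵥ p + α * (w ⬝ᵥ q) := by
        simp only [dotProduct, mul_add, Finset.sum_add_distrib, Finset.mul_sum]
        congr 1
        exact Finset.sum_congr rfl fun k _ => by ring
      rw [hsum]
      have hw0C : G j ⬝ᵥ H⁻¹ *ᵥ G j = C + w ⬝ᵥ q := by
        have e : G j ⬝ᵥ H⁻¹ *ᵥ G j = w0 H G j := rfl
        rw [e, hCq]; ring
      rw [hw0C]
      linear_combination -hαC
  have hzAi : zOf H G b S Ai θ = (H⁻¹ * (subRows G Ai)ᵀ) *ᵥ p := by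
    show -((H⁻¹ * (subRows G Ai)ᵀ) *ᵥ (lamOf H G b S Ai θ)) = _
    have h1 : lamOf H G b S Ai θ = -p := rfl
    rw [h1, Matrix.mulVec_neg, neg_neg]
  have hzAj : zOf H G b S (insert j Ai) θ
      = (H⁻¹ * (subRows G (insert j Ai))ᵀ) *ᵥ x := by
    have h2 : lamOf H G b S (insert j Ai) θ = -x := by
      have h1 : M⁻¹ *ᵥ (fun i : {i // i ∈ insert j Ai} => u i.val) = x :=
        inv_mulVec_of_mulVec_eq hMu hMx
      show -(M⁻¹ *ᵥ (fun i : {i // i ∈ insert j Ai} => u i.val)) = -x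
      rw [h1]
    show -((H⁻¹ * (subRows G (insert j Ai))ᵀ) *ᵥ (lamOf H G b S (insert j Ai) θ)) = _
    rw [h2, Matrix.mulVec_neg, neg_neg]
  set dj : {i // i ∈ insert j Ai} → ℝ := fun i => dExt H G Ai j i.val with hdj
  have hdjj : dj ⟨j, hjmem⟩ = -1 := by simp [hdj, dExt, hj]
  have hdjk : ∀ k : {i // i ∈ Ai}, dj ⟨k.1, Finset.mem_insert_of_mem k.2⟩ = q k := by
    intro k
    show dExt H G Ai j k.1 = q k
    rw [dExt]
    rw [dif_pos k.2]
  have hfi' : fi = (H⁻¹ * (subRows G (insert j Ai))ᵀ) *ᵥ (-dj) := by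
    rw [hfi, Matrix.mulVec_neg]
    rfl
  have hαeq : ci + vi ⬝ᵥ θ = α := by
    rw [hci, hvi]
    show (Cval H G Ai j)⁻¹ * (wvec H G Ai j ⬝ᵥ (Wmat H G Ai)⁻¹ *ᵥ subVec b Ai - b j)
        + ((Cval H G Ai j)⁻¹ •
            ((subRows S Ai)ᵀ *ᵥ ((Wmat H G Ai)⁻¹ *ᵥ wvec H G Ai j) - S j)) ⬝ᵥ θ = α
    rw [← hCdef, ← hWdef, ← hwdef, ← hq]
    rw [smul_dotProduct, sub_dotProduct, smul_eq_mul, ← mul_add]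
    rw [hαdef]
    congr 1
    have hkey : ((subRows S Ai)ᵀ *ᵥ q) ⬝ᵥ θ
        = w ⬝ᵥ (W⁻¹ *ᵥ (fun i : {i // i ∈ Ai} => (S *ᵥ θ) i.val)) := by
      rw [Matrix.mulVec_transpose, ← Matrix.dotProduct_mulVec]
      rw [Matrix.dotProduct_mulVec w]
      have hq2 : w ᵥ* W⁻¹ = q := by
        rw [← Matrix.mulVec_transpose, transpose_eq_of_isHermitian hW.inv.isHermitian, ← hq]
      rw [hq2]
      rfl
    have huA : (fun i : {i // i ∈ Ai} => u i.val)
        = subVec b Ai + (fun i : {i // i ∈ Ai} => (S *ᵥ θ) i.val) := rfl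
    rw [hp, huA, Matrix.mulVec_add, dotProduct_add, hkey]
    have huj : u j = b j + (S *ᵥ θ) j := rfl
    have hSj : (S *ᵥ θ) j = S j ⬝ᵥ θ := rfl
    rw [huj, hSj]
    ring
  rw [hzAi, hzAj, hfi', hαeq, ← Matrix.mulVec_smul, ← Matrix.mulVec_add]
  funext r
  have hL : ((H⁻¹ * (subRows G Ai)ᵀ) *ᵥ p) r
      = ∑ k : {i // i ∈ Ai}, (H⁻¹ * (subRows G Ai)ᵀ) r k * p k := rfl
  have hR : ((H⁻¹ * (subRows G (insert j Ai))ᵀ) *ᵥ (x + α • -dj)) r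
      = ∑ k : {i // i ∈ insert j Ai},
          (H⁻¹ * (subRows G (insert j Ai))ᵀ) r k * (x + α • -dj) k := rfl
  rw [hL, hR, sum_insert_subtype hj]
  have hjz : (x + α • -dj) ⟨j, hjmem⟩ = 0 := by
    simp only [Pi.add_apply, Pi.smul_apply, Pi.neg_apply, hxj, hdjj, smul_eq_mul]
    ring
  rw [hjz, mul_zero, zero_add]
  refine Finset.sum_congr rfl fun k _ => ?_
  have hkz : (x + α • -dj) ⟨k.1, Finset.mem_insert_of_mem k.2⟩ = p k := by
    simp only [Pi.add_apply, Pi.smul_apply, Pi.neg_apply, hxk, hdjk, smul_eq_mul]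
    ring
  rw [hkz]
  congr 1

end MpQP
end
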